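/- There exist constants $C_1, C_2, C_3, C_4 > 0$ such that for all $\lambda>0$, all $t>0$, all $s>0$, and each $k\in\{1,2,3,4\}$, the function $E_{\lambda,t}(s) := e^{-\lambda^s t}$ satisfies $0 < E_{\lambda,t}(s) \le 1$ and $\left|\frac{d^k}{ds^k} E_{\lambda,t}(s)\right| \le \frac{C_k}{s^k}\left(1 + |\ln t|^k\right)$. -/

import Mathlib

lemma aux_pow_mul_exp_neg_le (n : ℕ) (hn : 1 ≤ n) (u : ℝ) (hu : 0 ≤ u) :
    u ^ n * Real.exp (-u) ≤ (n : ℝ) ^ n := by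
  have hn' : (0:ℝ) < n := by positivity
  have h1 : u / n ≤ Real.exp (u / n) := by
    linarith [Real.add_one_le_exp (u / n)]
  have h2 : (u / n) ^ n ≤ Real.exp (u / n) ^ n :=
    pow_le_pow_left₀ (by positivity) h1 n
  have h3 : Real.exp (u / n) ^ n = Real.exp u := by
    rw [← Real.exp_nat_mul]; congr 1; field_simp
  rw [div_pow, h3, div_le_iff₀ (by positivity)] at h2
  calc u ^ n * Real.exp (-u) ≤ (Real.exp u * (n:ℝ)^n) * Real.exp (-u) := by
        have hE : (0:ℝ) ≤ Real.exp (-u) := (Real.exp_pos _).le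
        exact mul_le_mul_of_nonneg_right h2 hE
    _ = (n:ℝ)^n := by rw [mul_comm (Real.exp u), mul_assoc, ← Real.exp_add]; simp

lemma aux_polyexp_bound (u : ℝ) (hu : 0 < u) :
    (7*u*(1+u)^3) * Real.exp (-u) ≤ 2450 := by
  have e1 : u^1 * Real.exp (-u) ≤ 1 := by
    have := aux_pow_mul_exp_neg_le 1 (by norm_num) u hu.le; norm_num at this ⊢; linarith
  have e2 : u^2 * Real.exp (-u) ≤ 4 := by
    have := aux_pow_mul_exp_neg_le 2 (by norm_num) u hu.le; norm_num at this; linarith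
  have e3 : u^3 * Real.exp (-u) ≤ 27 := by
    have := aux_pow_mul_exp_neg_le 3 (by norm_num) u hu.le; norm_num at this; linarith
  have e4 : u^4 * Real.exp (-u) ≤ 256 := by
    have := aux_pow_mul_exp_neg_le 4 (by norm_num) u hu.le; norm_num at this; linarith
  nlinarith [e1, e2, e3, e4, (Real.exp_pos (-u)).le]

lemma aux_logpow_bound (k : ℕ) (hk1 : 1 ≤ k) (hk4 : k ≤ 4) (u : ℝ) (hu : 0 < u) :
    |Real.log u|^k * (7*u*(1+u)^3) * Real.exp (-u) ≤ 135736566 := by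
  have hE : (0:ℝ) ≤ Real.exp (-u) := (Real.exp_pos _).le
  rcases le_or_gt 1 u with h | h
  · have hlog : |Real.log u| = Real.log u := abs_of_nonneg (Real.log_nonneg h)
    have h1 : Real.log u ≤ u := by linarith [Real.log_le_sub_one_of_pos hu]
    have h2 : |Real.log u|^k ≤ u^4 := by
      rw [hlog]
      calc (Real.log u)^k ≤ u^k := pow_le_pow_left₀ (Real.log_nonneg h) h1 k
        _ ≤ u^4 := pow_le_pow_right₀ h hk4
    have e5 : u^5 * Real.exp (-u) ≤ 3125 := by
      have := aux_pow_mul_exp_neg_le 5 (by norm_num) u hu.le; norm_num at this; linarith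
    have e6 : u^6 * Real.exp (-u) ≤ 46656 := by
      have := aux_pow_mul_exp_neg_le 6 (by norm_num) u hu.le; norm_num at this; linarith
    have e7 : u^7 * Real.exp (-u) ≤ 823543 := by
      have := aux_pow_mul_exp_neg_le 7 (by norm_num) u hu.le; norm_num at this; linarith
    have e8 : u^8 * Real.exp (-u) ≤ 16777216 := by
      have := aux_pow_mul_exp_neg_le 8 (by norm_num) u hu.le; norm_num at this; linarith
    have hm : |Real.log u|^k * ((7*u*(1+u)^3) * Real.exp (-u))
        ≤ u^4 * ((7*u*(1+u)^3) * Real.exp (-u)) := by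
      apply mul_le_mul_of_nonneg_right h2
      positivity
    nlinarith [hm, e5, e6, e7, e8]
  · have hlog : |Real.log u| = -Real.log u := abs_of_nonpos (Real.log_nonpos hu.le h.le)
    set w := -Real.log u with hw
    have hw0 : 0 ≤ w := by rw [hw]; linarith [Real.log_nonpos hu.le h.le]
    have hue : u = Real.exp (-w) := by rw [hw, neg_neg, Real.exp_log hu]
    have hwk : w^k * Real.exp (-w) ≤ 256 := by
      have h1 := aux_pow_mul_exp_neg_le k hk1 w hw0
      have h2 : ((k:ℝ))^k ≤ 256 := by interval_cases k <;> norm_num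
      linarith
    have h256 : w^k * u ≤ 256 := by rw [show u = Real.exp (-w) from hue]; exact hwk
    have hcube : (1+u)^3 ≤ 8 := by
      calc (1+u)^3 ≤ 2^3 := pow_le_pow_left₀ (by linarith) (by linarith) 3
        _ = 8 := by norm_num
    have hE1 : Real.exp (-u) ≤ 1 := Real.exp_le_one_iff.mpr (by linarith)
    have s1 : (1+u)^3 * Real.exp (-u) ≤ 8 := by
      nlinarith [pow_nonneg (by linarith : (0:ℝ) ≤ 1+u) 3]
    have s2 : (w^k * u) * ((1+u)^3 * Real.exp (-u)) ≤ 256 * 8 :=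
      mul_le_mul h256 s1 (by positivity) (by norm_num)
    rw [hlog]
    nlinarith [s2]

lemma aux_main_bound (L t s : ℝ) (ht : 0 < t) (hs : 0 < s) (k : ℕ) (hk1 : 1 ≤ k) (hk4 : k ≤ 4)
    (P : ℝ)
    (hP : |P| ≤ 7 * (Real.exp (L*s)*t) * (1 + Real.exp (L*s)*t)^3) :
    |L^k * P * Real.exp (-(Real.exp (L*s)*t))|
      ≤ 2200000000 / s^k * (1 + |Real.log t|^k) := by
  set u := Real.exp (L*s)*t with hu
  have hu0 : 0 < u := by rw [hu]; positivity
  have hE : (0:ℝ) < Real.exp (-u) := Real.exp_pos _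
  have hlogu : Real.log u = L*s + Real.log t := by
    rw [hu, Real.log_mul (Real.exp_ne_zero _) (ne_of_gt ht), Real.log_exp]
  have hLs : |L| * s ≤ |Real.log u| + |Real.log t| := by
    have h0 : L * s = Real.log u - Real.log t := by linarith
    calc |L| * s = |L * s| := by rw [abs_mul, abs_of_pos hs]
      _ = |Real.log u - Real.log t| := by rw [h0]
      _ ≤ |Real.log u| + |Real.log t| := abs_sub _ _
  have hLk : |L|^k * s^k ≤ 16 * (|Real.log u|^k + |Real.log t|^k) := by
    have h1 : (|L| * s)^k ≤ (|Real.log u| + |Real.log t|)^k :=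
      pow_le_pow_left₀ (by positivity) hLs k
    have h2 : (|Real.log u| + |Real.log t|)^k
        ≤ 2^(k-1) * (|Real.log u|^k + |Real.log t|^k) :=
      add_pow_le (abs_nonneg _) (abs_nonneg _) k
    have h3 : (2:ℝ)^(k-1) ≤ 16 := by interval_cases k <;> norm_num
    have h4 : (0:ℝ) ≤ |Real.log u|^k + |Real.log t|^k := by positivity
    calc |L|^k * s^k = (|L| * s)^k := (mul_pow _ _ _).symm
      _ ≤ (|Real.log u| + |Real.log t|)^k := h1
      _ ≤ 2^(k-1) * (|Real.log u|^k + |Real.log t|^k) := h2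
      _ ≤ 16 * (|Real.log u|^k + |Real.log t|^k) := by nlinarith
  have hA := aux_logpow_bound k hk1 hk4 u hu0
  have hB := aux_polyexp_bound u hu0
  have habs : |L^k * P * Real.exp (-u)| = |L|^k * |P| * Real.exp (-u) := by
    rw [abs_mul, abs_mul, abs_pow, Real.abs_exp]
  rw [habs, div_mul_eq_mul_div, le_div_iff₀ (by positivity : (0:ℝ) < s^k)]
  have hb0 : (0:ℝ) ≤ |Real.log t|^k := by positivity
  have ha0 : (0:ℝ) ≤ |Real.log u|^k := by positivity
  have hQ0 : (0:ℝ) ≤ 7*u*(1+u)^3 := by positivity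
  calc |L|^k * |P| * Real.exp (-u) * s^k
      = (|L|^k * s^k) * (|P| * Real.exp (-u)) := by ring
    _ ≤ (16 * (|Real.log u|^k + |Real.log t|^k)) * (|P| * Real.exp (-u)) := by
        apply mul_le_mul_of_nonneg_right hLk (by positivity)
    _ = 16 * (|Real.log u|^k * (|P| * Real.exp (-u)))
        + 16 * (|Real.log t|^k * (|P| * Real.exp (-u))) := by ring
    _ ≤ 16 * (|Real.log u|^k * ((7*u*(1+u)^3) * Real.exp (-u)))
        + 16 * (|Real.log t|^k * ((7*u*(1+u)^3) * Real.exp (-u))) := by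
        gcongr
    _ ≤ 16 * 135736566 + 16 * (|Real.log t|^k * 2450) := by
        have h5 : |Real.log u|^k * ((7*u*(1+u)^3) * Real.exp (-u)) ≤ 135736566 := by
          nlinarith [hA]
        have h6 : |Real.log t|^k * ((7*u*(1+u)^3) * Real.exp (-u)) ≤ |Real.log t|^k * 2450 :=
          mul_le_mul_of_nonneg_left hB hb0
        linarith
    _ ≤ 2200000000 * (1 + |Real.log t|^k) := by nlinarith

/-- There are constants `C_1, …, C_4 > 0` such that for all `λ, t, s > 0` the function
`E_{λ,t}(s) = e^{-λ^s t}` satisfies `0 < E ≤ 1` and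
`|d^k/ds^k E_{λ,t}(s)| ≤ (C_k / s^k)(1 + |ln t|^k)` for `k = 1, …, 4`. -/
theorem stmt10 :
    ∃ C : ℕ → ℝ, (∀ k, 1 ≤ k → k ≤ 4 → 0 < C k) ∧
      ∀ lam t s : ℝ, 0 < lam → 0 < t → 0 < s →
        (0 < Real.exp (-(lam ^ s) * t) ∧ Real.exp (-(lam ^ s) * t) ≤ 1) ∧
        ∀ k, 1 ≤ k → k ≤ 4 →
          |iteratedDeriv k (fun σ : ℝ => Real.exp (-(lam ^ σ) * t)) s|
            ≤ C k / s ^ k * (1 + |Real.log t| ^ k) := by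
  refine ⟨fun _ => 2200000000, fun k _ _ => by norm_num, ?_⟩
  intro lam t s hlam ht hs
  constructor
  · refine ⟨Real.exp_pos _, Real.exp_le_one_iff.mpr ?_⟩
    have h1 : 0 < lam ^ s := Real.rpow_pos_of_pos hlam s
    nlinarith
  set L := Real.log lam with hL
  have hfe : (fun σ : ℝ => Real.exp (-(lam ^ σ) * t))
      = fun σ : ℝ => Real.exp (-(Real.exp (L * σ) * t)) := by
    funext σ
    rw [Real.rpow_def_of_pos hlam, neg_mul]
  have hU : ∀ σ : ℝ, HasDerivAt (fun x : ℝ => Real.exp (L * x) * t)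
      (L * (Real.exp (L * σ) * t)) σ := by
    intro σ
    have h := ((hasDerivAt_id σ).const_mul L).exp.mul_const t
    simp only [id_eq] at h
    exact h.congr_deriv (by ring)
  have hexp : ∀ σ : ℝ, HasDerivAt (fun x : ℝ => Real.exp (-(Real.exp (L*x)*t)))
      (-(L * (Real.exp (L*σ)*t)) * Real.exp (-(Real.exp (L*σ)*t))) σ := by
    intro σ
    have h := ((hU σ).neg).exp
    exact h.congr_deriv (by simp only [Pi.neg_apply]; ring)
  have h1 : ∀ σ : ℝ, HasDerivAt (fun x : ℝ => Real.exp (-(Real.exp (L*x)*t)))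
      (L^1 * (-(Real.exp (L*σ)*t)) * Real.exp (-(Real.exp (L*σ)*t))) σ := by
    intro σ
    convert hexp σ using 1; ring
  have h2 : ∀ σ : ℝ, HasDerivAt
      (fun x : ℝ => L^1 * (-(Real.exp (L*x)*t)) * Real.exp (-(Real.exp (L*x)*t)))
      (L^2 * ((Real.exp (L*σ)*t)^2 - (Real.exp (L*σ)*t)) * Real.exp (-(Real.exp (L*σ)*t))) σ := by
    intro σ
    have ha := ((hU σ).neg).const_mul (L^1)
    have h := ha.mul (hexp σ)
    exact h.congr_deriv (by simp only [Pi.neg_apply, Pi.sub_apply, Pi.add_apply, Pi.pow_apply]; ring)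
  have h3 : ∀ σ : ℝ, HasDerivAt
      (fun x : ℝ => L^2 * ((Real.exp (L*x)*t)^2 - (Real.exp (L*x)*t)) * Real.exp (-(Real.exp (L*x)*t)))
      (L^3 * (-(Real.exp (L*σ)*t)^3 + 3*(Real.exp (L*σ)*t)^2 - (Real.exp (L*σ)*t))
        * Real.exp (-(Real.exp (L*σ)*t))) σ := by
    intro σ
    have ha := (((hU σ).pow 2).sub (hU σ)).const_mul (L^2)
    have h := ha.mul (hexp σ)
    exact h.congr_deriv (by simp only [Pi.neg_apply, Pi.sub_apply, Pi.add_apply, Pi.pow_apply]; ring)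
  have h4 : ∀ σ : ℝ, HasDerivAt
      (fun x : ℝ => L^3 * (-(Real.exp (L*x)*t)^3 + 3*(Real.exp (L*x)*t)^2 - (Real.exp (L*x)*t))
        * Real.exp (-(Real.exp (L*x)*t)))
      (L^4 * ((Real.exp (L*σ)*t)^4 - 6*(Real.exp (L*σ)*t)^3 + 7*(Real.exp (L*σ)*t)^2
        - (Real.exp (L*σ)*t)) * Real.exp (-(Real.exp (L*σ)*t))) σ := by
    intro σ
    have ha := ((((hU σ).pow 3).neg.add (((hU σ).pow 2).const_mul 3)).sub (hU σ)).const_mul (L^3)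
    have h := ha.mul (hexp σ)
    exact h.congr_deriv (by simp only [Pi.neg_apply, Pi.sub_apply, Pi.add_apply, Pi.pow_apply]; ring)
  have e1 : iteratedDeriv 1 (fun x : ℝ => Real.exp (-(Real.exp (L*x)*t)))
      = fun σ : ℝ => L^1 * (-(Real.exp (L*σ)*t)) * Real.exp (-(Real.exp (L*σ)*t)) := by
    rw [iteratedDeriv_one]
    funext σ; exact (h1 σ).deriv
  have e2 : iteratedDeriv 2 (fun x : ℝ => Real.exp (-(Real.exp (L*x)*t)))
      = fun σ : ℝ => L^2 * ((Real.exp (L*σ)*t)^2 - (Real.exp (L*σ)*t))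
          * Real.exp (-(Real.exp (L*σ)*t)) := by
    rw [iteratedDeriv_succ, e1]
    funext σ; exact (h2 σ).deriv
  have e3 : iteratedDeriv 3 (fun x : ℝ => Real.exp (-(Real.exp (L*x)*t)))
      = fun σ : ℝ => L^3 * (-(Real.exp (L*σ)*t)^3 + 3*(Real.exp (L*σ)*t)^2 - (Real.exp (L*σ)*t))
          * Real.exp (-(Real.exp (L*σ)*t)) := by
    rw [iteratedDeriv_succ, e2]
    funext σ; exact (h3 σ).deriv
  have e4 : iteratedDeriv 4 (fun x : ℝ => Real.exp (-(Real.exp (L*x)*t)))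
      = fun σ : ℝ => L^4 * ((Real.exp (L*σ)*t)^4 - 6*(Real.exp (L*σ)*t)^3 + 7*(Real.exp (L*σ)*t)^2
          - (Real.exp (L*σ)*t)) * Real.exp (-(Real.exp (L*σ)*t)) := by
    rw [iteratedDeriv_succ, e3]
    funext σ; exact (h4 σ).deriv
  intro k hk1 hk4
  rw [hfe]
  have hu0 : 0 < Real.exp (L*s)*t := by positivity
  interval_cases k
  · rw [e1]
    refine aux_main_bound L t s ht hs 1 le_rfl (by norm_num) _ ?_
    rw [abs_neg, abs_of_pos hu0]
    nlinarith [hu0, mul_pos hu0 hu0, mul_pos (mul_pos hu0 hu0) hu0,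
      mul_pos (mul_pos (mul_pos hu0 hu0) hu0) hu0]
  · rw [e2]
    refine aux_main_bound L t s ht hs 2 (by norm_num) (by norm_num) _ ?_
    rw [abs_le]
    constructor <;> nlinarith [hu0]
  · rw [e3]
    refine aux_main_bound L t s ht hs 3 (by norm_num) (by norm_num) _ ?_
    rw [abs_le]
    constructor <;> nlinarith [hu0]
  · rw [e4]
    refine aux_main_bound L t s ht hs 4 (by norm_num) (by norm_num) _ ?_
    rw [abs_le]
    constructor <;> nlinarith [hu0]
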